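/- Let X be an infinite, locally finite connected graph with injective edge labels U : E → ℝ, and let F be the free minimal spanning forest (e ∈ F iff no path connects the endpoints of e using only edges with labels less than U(e)). Then every connected component of F is infinite. -/

import Mathlib

/-- Every connected component of the free minimal spanning forest of an
infinite, locally finite, connected graph with distinct edge labels is
infinite. -/
theorem stmt_8 {V : Type*} [Infinite V] (G : SimpleGraph V) [G.LocallyFinite]
    (hG : G.Connected) (U : Sym2 V → ℝ) (hU : Set.InjOn U G.edgeSet) :
    ∀ c : (SimpleGraph.fromRel (fun a b =>
        G.Adj a b ∧ ¬∃ w : G.Walk a b, ∀ e ∈ w.edges, U e < U s(a, b))).ConnectedComponent,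
      c.supp.Infinite := by
  intro c
  by_contra hfin
  rw [Set.not_infinite] at hfin
  have hK : (c.supp : Set V) = c.supp := rfl
  -- c.supp is nonempty
  obtain ⟨v0, hv0⟩ := c.exists_rep
  have hv0K : v0 ∈ c.supp := hv0
  -- some vertex outside K
  obtain ⟨u, hu⟩ : ∃ u, u ∉ c.supp := by
    obtain ⟨u, hu⟩ := hfin.infinite_compl.nonempty
    exact ⟨u, hu⟩
  -- set of boundary darts
  set S : Set G.Dart := {d | d.fst ∈ c.supp ∧ d.snd ∉ c.supp} with hS
  have hSfin : S.Finite := by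
    have himg : (SimpleGraph.Dart.toProd '' S : Set (V × V)) ⊆
        c.supp ×ˢ (⋃ v ∈ c.supp, (G.neighborSet v)) := by
      rintro p ⟨d, hd, rfl⟩
      refine ⟨hd.1, ?_⟩
      simp only [Set.mem_iUnion]
      exact ⟨d.fst, hd.1, d.adj⟩
    have hfin2 : (c.supp ×ˢ (⋃ v ∈ c.supp, (G.neighborSet v))).Finite :=
      Set.Finite.prod hfin (hfin.biUnion fun v _ => (G.neighborSet v).toFinite)
    have : (SimpleGraph.Dart.toProd '' S : Set (V × V)).Finite := hfin2.subset himg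
    exact Set.Finite.of_finite_image this
      (fun d₁ _ d₂ _ h => SimpleGraph.Dart.ext _ _ h)
  have hSne : S.Nonempty := by
    obtain ⟨p⟩ := (hG v0 u)
    obtain ⟨d, _, hd1, hd2⟩ := p.exists_boundary_dart c.supp hv0K hu
    exact ⟨d, hd1, hd2⟩
  obtain ⟨d, hdS, hdmin⟩ := Set.exists_min_image S (fun d => U d.edge) hSfin hSne
  -- d is an F-edge
  have hrel : ¬∃ w : G.Walk d.fst d.snd, ∀ e ∈ w.edges, U e < U s(d.fst, d.snd) := by
    rintro ⟨w, hw⟩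
    obtain ⟨d', hd'w, hd'1, hd'2⟩ := w.exists_boundary_dart c.supp hdS.1 hdS.2
    have hmem : d'.edge ∈ w.edges := List.mem_map_of_mem hd'w
    have hlt := hw _ hmem
    have hle := hdmin d' ⟨hd'1, hd'2⟩
    have : U d.edge = U s(d.fst, d.snd) := rfl
    rw [this] at hle
    exact absurd hlt (not_lt.mpr hle)
  have hFadj : (SimpleGraph.fromRel (fun a b =>
        G.Adj a b ∧ ¬∃ w : G.Walk a b, ∀ e ∈ w.edges, U e < U s(a, b))).Adj d.fst d.snd := by
    rw [SimpleGraph.fromRel_adj]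
    exact ⟨d.adj.ne, Or.inl ⟨d.adj, hrel⟩⟩
  have : d.snd ∈ c.supp := by
    have h1 : (SimpleGraph.fromRel (fun a b => G.Adj a b ∧ ¬∃ w : G.Walk a b, ∀ e ∈ w.edges, U e < U s(a, b))).connectedComponentMk d.fst = c := hdS.1
    have h2 : (SimpleGraph.fromRel (fun a b => G.Adj a b ∧ ¬∃ w : G.Walk a b, ∀ e ∈ w.edges, U e < U s(a, b))).connectedComponentMk d.snd = (SimpleGraph.fromRel (fun a b => G.Adj a b ∧ ¬∃ w : G.Walk a b, ∀ e ∈ w.edges, U e < U s(a, b))).connectedComponentMk d.fst :=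
      SimpleGraph.ConnectedComponent.connectedComponentMk_eq_of_adj hFadj.symm
    show (SimpleGraph.fromRel (fun a b => G.Adj a b ∧ ¬∃ w : G.Walk a b, ∀ e ∈ w.edges, U e < U s(a, b))).connectedComponentMk d.snd = c
    rw [h2, h1]
  exact hdS.2 this
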